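/- Suppose a sequence of pruning operations of types P_A and P_C is applied to the search tree 𝒯(G,π₀): P_A(ν,ν') removes the subtree at ν' whenever |ν|=|ν'| and φ(G,π₀,ν) > φ(G,π₀,ν'); P_C(ν,g) with g ∈ Aut(G,π₀) and ν < ν^g removes the subtree at ν^g (in lexicographic order on sequences). Then at least one leaf ν₁ with φ(G,π₀,ν₁) = φ*(G,π₀) (the maximum invariant value over all leaves) remains in the pruned tree. -/

import Mathlib

/-- Relabelling action of a permutation on a graph: `v^g` adjacent to `w^g` iff `v` adjacent `w`. -/
def gactG {n : ℕ} (g : Equiv.Perm (Fin n)) (G : SimpleGraph (Fin n)) : SimpleGraph (Fin n) where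
  Adj v w := G.Adj (g⁻¹ v) (g⁻¹ w)
  symm := ⟨fun _ _ h => G.symm.symm _ _ h⟩
  loopless := ⟨fun _ h => G.loopless.irrefl _ h⟩

/-- Relabelling action of a permutation on a colouring. -/
def gactC {n : ℕ} (g : Equiv.Perm (Fin n)) (π : Fin n → ℕ) : Fin n → ℕ :=
  fun v => π (g⁻¹ v)

/-- A colouring of `V`: a function surjective onto `{1,…,k}` for some `k`. -/
def IsCol {n : ℕ} (π : Fin n → ℕ) : Prop := ∃ k, Set.range π = Set.Icc 1 k

/-- `π'` is finer than or equal to `π`. -/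
def FinerC {n : ℕ} (π' π : Fin n → ℕ) : Prop := ∀ v w, π v < π w → π' v < π' w

/-- Nodes of the search tree with child rule given by the target cells `Tc`. -/
inductive IsTNode {n : ℕ} (Tc : List (Fin n) → Set (Fin n)) : List (Fin n) → Prop
  | root : IsTNode Tc []
  | child {ν : List (Fin n)} {w : Fin n} :
      IsTNode Tc ν → w ∈ Tc ν → IsTNode Tc (ν ++ [w])

/-- The labelled graph `G^π` for a (discrete) colouring `π`, as a set of labelled edges. -/
def relabelSet {n : ℕ} (G : SimpleGraph (Fin n)) (π : Fin n → ℕ) : Set (ℕ × ℕ) :=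
  {p | ∃ v w, G.Adj v w ∧ π v = p.1 ∧ π w = p.2}

/-- Equitable colouring: same-coloured vertices have equally many neighbours of each colour. -/
def IsEquit {n : ℕ} (G : SimpleGraph (Fin n)) (π : Fin n → ℕ) : Prop :=
  ∀ v w, π v = π w → ∀ j,
    {u | G.Adj v u ∧ π u = j}.ncard = {u | G.Adj w u ∧ π u = j}.ncard

lemma gactG_inv_gact {n : ℕ} (g : Equiv.Perm (Fin n)) (G : SimpleGraph (Fin n)) :
    gactG g⁻¹ (gactG g G) = G := by
  ext v w; simp [gactG]

lemma gactC_inv_gact {n : ℕ} (g : Equiv.Perm (Fin n)) (π : Fin n → ℕ) :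
    gactC g⁻¹ (gactC g π) = π := by
  funext v; simp [gactC]

lemma lex_ext {α : Type*} {r : α → α → Prop} :
    ∀ {a b : List α}, List.Lex r a b → a.length = b.length →
      ∀ (s t : List α), List.Lex r (a ++ s) (b ++ t) := by
  intro a b h
  induction h with
  | nil => intro hl; simp at hl
  | @cons c as bs h ih =>
      intro hl s t
      simp only [List.length_cons, Nat.add_right_cancel_iff] at hl
      exact List.Lex.cons (ih hl s t)
  | @rel a as b bs h =>
      intro _ s t
      exact List.Lex.rel h

/-- After any sequence of P_A and P_C prunings, some φ-maximal leaf remains. -/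
theorem stmt13 {n : ℕ} {Ω : Type*} [LinearOrder Ω]
    (R : SimpleGraph (Fin n) → (Fin n → ℕ) → List (Fin n) → (Fin n → ℕ))
    (T : SimpleGraph (Fin n) → (Fin n → ℕ) → List (Fin n) → Set (Fin n))
    (hR1 : ∀ G π ν, FinerC (R G π ν) π)
    (hR2 : ∀ G π ν, ∀ v ∈ ν, (R G π ν) ⁻¹' {R G π ν v} = {v})
    (hR3 : ∀ G π ν (g : Equiv.Perm (Fin n)),
      R (gactG g G) (gactC g π) (ν.map g) = gactC g (R G π ν))
    (hT1 : ∀ G π ν, Function.Injective (R G π ν) → T G π ν = ∅)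
    (hT2 : ∀ G π ν, ¬ Function.Injective (R G π ν) →
      ∃ j, T G π ν = (R G π ν) ⁻¹' {j} ∧ ∃ v w, v ∈ T G π ν ∧ w ∈ T G π ν ∧ v ≠ w)
    (hT3 : ∀ G π ν (g : Equiv.Perm (Fin n)),
      T (gactG g G) (gactC g π) (ν.map g) = g '' (T G π ν))
    (φ : SimpleGraph (Fin n) → (Fin n → ℕ) → List (Fin n) → Ω)
    (hφ1 : ∀ (G : SimpleGraph (Fin n)) (π₀ : Fin n → ℕ) (ν ν' : List (Fin n)),
      IsTNode (T G π₀) ν → IsTNode (T G π₀) ν' → ν ≠ ν' → ν.length = ν'.length →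
      φ G π₀ ν < φ G π₀ ν' →
      ∀ ν₁ ν₁', IsTNode (T G π₀) ν₁ → ν <+: ν₁ → Function.Injective (R G π₀ ν₁) →
        IsTNode (T G π₀) ν₁' → ν' <+: ν₁' → Function.Injective (R G π₀ ν₁') →
        φ G π₀ ν₁ < φ G π₀ ν₁')
    (hφ2 : ∀ (G : SimpleGraph (Fin n)) (π₀ : Fin n → ℕ) (ν ν' : List (Fin n)),
      IsTNode (T G π₀) ν → IsTNode (T G π₀) ν' →
      Function.Injective (R G π₀ ν) → Function.Injective (R G π₀ ν') →
      (φ G π₀ ν = φ G π₀ ν' ↔ relabelSet G (R G π₀ ν) = relabelSet G (R G π₀ ν')))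
    (hφ3 : ∀ (G : SimpleGraph (Fin n)) (π₀ : Fin n → ℕ) (ν : List (Fin n))
      (g : Equiv.Perm (Fin n)), φ (gactG g G) (gactC g π₀) (ν.map g) = φ G π₀ ν)
    (G : SimpleGraph (Fin n)) (π₀ : Fin n → ℕ)
    (S : Set (List (Fin n)))
    (hS : ∀ μ ∈ S,
      -- operation P_A(ν,μ)
      (∃ ν, IsTNode (T G π₀) ν ∧ IsTNode (T G π₀) μ ∧ ν ≠ μ ∧
        ν.length = μ.length ∧ φ G π₀ μ < φ G π₀ ν) ∨
      -- operation P_C(ν,g) removing μ = ν^g with ν < ν^g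
      (∃ (ν : List (Fin n)) (g : Equiv.Perm (Fin n)),
        gactG g G = G ∧ gactC g π₀ = π₀ ∧ IsTNode (T G π₀) ν ∧
        μ = ν.map g ∧ List.Lex (· < ·) ν μ)) :
    ∃ ν₁ : List (Fin n), IsTNode (T G π₀) ν₁ ∧ Function.Injective (R G π₀ ν₁) ∧
      (∀ μ, IsTNode (T G π₀) μ → Function.Injective (R G π₀ μ) →
        φ G π₀ μ ≤ φ G π₀ ν₁) ∧
      ∀ μ ∈ S, ¬ μ <+: ν₁ := by
  classical
  -- members of T ν are not in ν
  have not_mem_T : ∀ ν, ∀ w ∈ T G π₀ ν, w ∉ ν := by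
    intro ν w hw hwν
    by_cases hinj : Function.Injective (R G π₀ ν)
    · rw [hT1 G π₀ ν hinj] at hw; exact hw
    · obtain ⟨j, hTj, v, u, hv, hu, hvu⟩ := hT2 G π₀ ν hinj
      have hfib := hR2 G π₀ ν w hwν
      have hwj : R G π₀ ν w = j := by
        have := hw; rw [hTj] at this; exact this
      have hvw : v = w := by
        have : v ∈ (R G π₀ ν) ⁻¹' {R G π₀ ν w} := by
          rw [hTj] at hv; simp only [Set.mem_preimage, Set.mem_singleton_iff, hwj]; exact hv
        rw [hfib] at this; exact this
      have huw : u = w := by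
        have : u ∈ (R G π₀ ν) ⁻¹' {R G π₀ ν w} := by
          rw [hTj] at hu; simp only [Set.mem_preimage, Set.mem_singleton_iff, hwj]; exact hu
        rw [hfib] at this; exact this
      exact hvu (hvw.trans huw.symm)
  -- nodes are duplicate-free
  have nodup : ∀ ν, IsTNode (T G π₀) ν → ν.Nodup := by
    intro ν h
    induction h with
    | root => simp
    | @child ν w hν hw ih =>
        simp only [List.nodup_append, List.nodup_cons, List.not_mem_nil, not_false_iff,
          List.nodup_nil, and_true, true_and]
        refine ⟨ih, ?_⟩
        intro a ha b hb
        rcases List.mem_singleton.mp hb with rfl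
        rintro rfl
        exact not_mem_T ν _ hw ha
  -- every node extends to a leaf
  have exists_leaf : ∀ (k : ℕ) (ν : List (Fin n)), IsTNode (T G π₀) ν → n ≤ ν.length + k →
      ∃ ν', IsTNode (T G π₀) ν' ∧ Function.Injective (R G π₀ ν') ∧ ν <+: ν' := by
    intro k
    induction k with
    | zero =>
        intro ν hν hlen
        by_cases hinj : Function.Injective (R G π₀ ν)
        · exact ⟨ν, hν, hinj, List.prefix_refl ν⟩
        · obtain ⟨j, hTj, v, u, hv, hu, hvu⟩ := hT2 G π₀ ν hinj
          have hchild : IsTNode (T G π₀) (ν ++ [v]) := IsTNode.child hν hv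
          have := (nodup _ hchild).length_le_card
          simp only [List.length_append, List.length_singleton, Fintype.card_fin] at this
          omega
    | succ k ih =>
        intro ν hν hlen
        by_cases hinj : Function.Injective (R G π₀ ν)
        · exact ⟨ν, hν, hinj, List.prefix_refl ν⟩
        · obtain ⟨j, hTj, v, u, hv, hu, hvu⟩ := hT2 G π₀ ν hinj
          have hchild : IsTNode (T G π₀) (ν ++ [v]) := IsTNode.child hν hv
          obtain ⟨ν', h1, h2, h3⟩ := ih (ν ++ [v]) hchild (by simp; omega)
          exact ⟨ν', h1, h2, (List.prefix_append ν [v]).trans h3⟩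
  -- automorphisms map nodes to nodes
  have node_map : ∀ (g : Equiv.Perm (Fin n)), gactG g G = G → gactC g π₀ = π₀ →
      ∀ ν, IsTNode (T G π₀) ν → IsTNode (T G π₀) (ν.map g) := by
    intro g hG hπ ν h
    induction h with
    | root => exact IsTNode.root
    | @child ν w hν hw ih =>
        have hT := hT3 G π₀ ν g
        rw [hG, hπ] at hT
        rw [List.map_append, List.map_singleton]
        exact IsTNode.child ih (by rw [hT]; exact ⟨w, hw, rfl⟩)
  -- the set of leaves
  set L : Set (List (Fin n)) :=
    {ν | IsTNode (T G π₀) ν ∧ Function.Injective (R G π₀ ν)} with hL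
  have hLfin : L.Finite := by
    apply (List.finite_length_le (Fin n) n).subset
    intro ν hν
    have := (nodup ν hν.1).length_le_card
    simpa using this
  have hLne : L.Nonempty := by
    obtain ⟨ν', h1, h2, _⟩ := exists_leaf n [] IsTNode.root (by simp)
    exact ⟨ν', h1, h2⟩
  -- a leaf of maximal invariant
  obtain ⟨νm, hνmL, hνmax⟩ := Set.exists_max_image L (φ G π₀) hLfin hLne
  -- the lexicographically least maximal leaf
  set M : Set (List (Fin n)) := {ν ∈ L | φ G π₀ νm ≤ φ G π₀ ν} with hM
  obtain ⟨ν₁, hν₁M, hν₁min⟩ := Set.exists_min_image M id (hLfin.subset (fun x hx => hx.1))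
    ⟨νm, hνmL, le_refl _⟩
  obtain ⟨⟨hν₁node, hν₁inj⟩, hν₁max⟩ := hν₁M
  have hmaxval : ∀ μ, IsTNode (T G π₀) μ → Function.Injective (R G π₀ μ) →
      φ G π₀ μ ≤ φ G π₀ ν₁ := by
    intro μ h1 h2
    exact le_trans (hνmax μ ⟨h1, h2⟩) hν₁max
  refine ⟨ν₁, hν₁node, hν₁inj, hmaxval, ?_⟩
  intro μ hμS hpre
  rcases hS μ hμS with ⟨ν, hν, hμ, hne, hlen, hφlt⟩ | ⟨ν, g, hG, hπ, hν, hμeq, hlex⟩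
  · -- P_A case
    obtain ⟨ν', h1, h2, h3⟩ := exists_leaf n ν hν (by omega)
    have := hφ1 G π₀ μ ν hμ hν (Ne.symm hne) hlen.symm hφlt
      ν₁ ν' hν₁node hpre hν₁inj h1 h3 h2
    exact absurd (hmaxval ν' h1 h2) (not_le.mpr this)
  · -- P_C case
    have hG' : gactG g⁻¹ G = G := by
      conv_lhs => rw [← hG]
      exact gactG_inv_gact g G
    have hπ' : gactC g⁻¹ π₀ = π₀ := by
      conv_lhs => rw [← hπ]
      exact gactC_inv_gact g π₀
    set ν₁' : List (Fin n) := List.map (⇑g⁻¹) ν₁ with hν₁'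
    have hnode' : IsTNode (T G π₀) ν₁' := node_map g⁻¹ hG' hπ' ν₁ hν₁node
    have hRmap := hR3 G π₀ ν₁ g⁻¹
    rw [hG', hπ'] at hRmap
    have hinj' : Function.Injective (R G π₀ ν₁') := by
      rw [hν₁', hRmap]
      intro a b hab
      simp only [gactC] at hab
      exact (Equiv.injective _) (hν₁inj hab)
    have hφeq : φ G π₀ ν₁' = φ G π₀ ν₁ := by
      have := hφ3 G π₀ ν₁ g⁻¹
      rw [hG', hπ'] at this
      exact this
    have hν₁'M : ν₁' ∈ M := ⟨⟨hnode', hinj'⟩, hφeq ▸ hν₁max⟩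
    -- ν = μ.map g⁻¹
    have hνμ : ν = List.map (⇑g⁻¹) μ := by
      rw [hμeq, List.map_map,
        show (⇑g⁻¹ ∘ ⇑g) = id from funext fun x => g.symm_apply_apply x, List.map_id]
    have hpre' : ν <+: ν₁' := by
      rw [hνμ, hν₁']
      exact hpre.map _
    -- lex: ν₁' < ν₁
    have hlex' : List.Lex (· < ·) ν₁' ν₁ := by
      obtain ⟨s, hs⟩ := hpre'
      obtain ⟨t, ht⟩ := hpre
      rw [← hs, ← ht]
      exact lex_ext hlex (by rw [hμeq]; simp) s t
    have hle : ν₁ ≤ ν₁' := hν₁min ν₁' hν₁'M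
    exact absurd (show ν₁' < ν₁ from hlex') (not_lt_of_ge hle)
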